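/- Let v, b ∈ ℂ^n with b_j ≠ 0 for every j, and let u, u' ∈ ℤ^n. Set I₀ = nsupp(v), I = nsupp(v+u), and J = nsupp(v+u−u'). Then, as an equation of integers, ord_s([v+sb]_{u₋} · [v+u+sb]_{u'₊}) − ord_s([v+u+sb]_{u₊}) = |I ∪ J| − |I₀|. (This is the order computation of equation (12) in the proof of Theorem 5.4: the coefficient a_u(s)·[v+sb+u]_{u'₊} arising from ∂^{u'₊} applied to a_u(s)x^{v+sb+u} has order |I_u ∪ J| − |I₀| in s.) -/

import Mathlib

open scoped Classical
open Polynomial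

/-- The negative support of `v`: indices where `v i` is a negative integer. -/
noncomputable def nsupp {n : ℕ} (v : Fin n → ℂ) : Finset (Fin n) :=
  Finset.univ.filter (fun i => ∃ m : ℤ, m < 0 ∧ v i = (m : ℂ))

/-- The falling factorial `[v]_u = ∏_i ∏_{k=0}^{u_i - 1} (v_i - k)`. -/
noncomputable def ffall {n : ℕ} (v : Fin n → ℂ) (u : Fin n → ℕ) : ℂ :=
  ∏ i, ∏ k ∈ Finset.range (u i), (v i - (k : ℂ))

/-- The reduced falling factorial: the product of the nonzero factors of `[v]_u`. -/
noncomputable def redffall {n : ℕ} (v : Fin n → ℂ) (u : Fin n → ℕ) : ℂ :=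
  ∏ i, ∏ k ∈ (Finset.range (u i)).filter (fun k : ℕ => v i - (k : ℂ) ≠ 0), (v i - (k : ℂ))

/-- The polynomial `[v + s b]_u = ∏_i ∏_{k=0}^{u_i - 1} (v_i - k + s b_i)` in `ℂ[s]`. -/
noncomputable def pertFF {n : ℕ} (v b : Fin n → ℂ) (u : Fin n → ℕ) : Polynomial ℂ :=
  ∏ i, ∏ k ∈ Finset.range (u i),
    (Polynomial.C (v i - (k : ℂ)) + Polynomial.C (b i) * Polynomial.X)

lemma linfac_ne_zero {a b : ℂ} (hb : b ≠ 0) : Polynomial.C a + Polynomial.C b * Polynomial.X ≠ 0 := by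
  intro h
  have := congrArg (fun p => Polynomial.coeff p 1) h
  simp at this
  exact hb this

lemma ntd_linfac (a : ℂ) {b : ℂ} (hb : b ≠ 0) :
    (Polynomial.C a + Polynomial.C b * Polynomial.X).natTrailingDegree = if a = 0 then 1 else 0 := by
  split_ifs with h
  · subst h
    simp
    rw [natTrailingDegree_mul (by simpa using hb) X_ne_zero]
    simp
  · rw [Polynomial.natTrailingDegree_eq_zero]
    right; simpa using h

lemma ntd_prod {ι : Type*} [DecidableEq ι] (s : Finset ι) (f : ι → Polynomial ℂ)
    (hf : ∀ i ∈ s, f i ≠ 0) :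
    (∏ i ∈ s, f i).natTrailingDegree = ∑ i ∈ s, (f i).natTrailingDegree := by
  induction s using Finset.induction with
  | empty => simp
  | insert _ _ hx ih =>
    rename_i a t
    rw [Finset.prod_insert hx, Finset.sum_insert hx,
      natTrailingDegree_mul (hf a (Finset.mem_insert_self a t))
        (Finset.prod_ne_zero_iff.mpr fun i hi => hf i (Finset.mem_insert_of_mem hi)),
      ih fun i hi => hf i (Finset.mem_insert_of_mem hi)]

lemma pertFF_ne_zero {n : ℕ} (v b : Fin n → ℂ) (w : Fin n → ℕ) (hb : ∀ j, b j ≠ 0) :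
    pertFF v b w ≠ 0 :=
  Finset.prod_ne_zero_iff.mpr fun i _ =>
    Finset.prod_ne_zero_iff.mpr fun _ _ => linfac_ne_zero (hb i)

lemma cnt_card (z : ℂ) (w : ℕ) :
    (((Finset.range w).filter (fun k : ℕ => z - (k : ℂ) = 0)).card : ℕ)
      = if ∃ k : ℕ, k < w ∧ z = (k : ℂ) then 1 else 0 := by
  split_ifs with h
  · obtain ⟨k, hk, hz⟩ := h
    have : (Finset.range w).filter (fun k : ℕ => z - (k : ℂ) = 0) = {k} := by
      ext j
      simp only [Finset.mem_filter, Finset.mem_range, Finset.mem_singleton, sub_eq_zero]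
      constructor
      · rintro ⟨hj, hzj⟩
        have : (j : ℂ) = (k : ℂ) := by rw [← hzj, ← hz]
        exact_mod_cast this
      · rintro rfl; exact ⟨hk, hz⟩
    rw [this]; rfl
  · rw [Finset.card_eq_zero.mpr]
    ext j
    simp only [Finset.mem_filter, Finset.mem_range, Finset.notMem_empty, iff_false, not_and,
      sub_eq_zero]
    intro hj hzj
    exact h ⟨j, hj, hzj⟩

lemma ntd_pertFF {n : ℕ} (v b : Fin n → ℂ) (w : Fin n → ℕ) (hb : ∀ j, b j ≠ 0) :
    (pertFF v b w).natTrailingDegree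
      = ∑ i, if ∃ k : ℕ, k < w i ∧ v i = (k : ℂ) then 1 else 0 := by
  unfold pertFF
  rw [ntd_prod _ _ (fun i _ => Finset.prod_ne_zero_iff.mpr fun _ _ => linfac_ne_zero (hb i))]
  refine Finset.sum_congr rfl fun i _ => ?_
  rw [ntd_prod _ _ (fun _ _ => linfac_ne_zero (hb i))]
  simp_rw [ntd_linfac _ (hb i)]
  rw [← Finset.card_filter, cnt_card]

lemma exists_nat_iff (m : ℤ) (w : ℕ) :
    (∃ k : ℕ, k < w ∧ (m : ℂ) = (k : ℂ)) ↔ 0 ≤ m ∧ m.toNat < w := by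
  constructor
  · rintro ⟨k, hk, he⟩
    have : m = (k : ℤ) := by exact_mod_cast he
    omega
  · rintro ⟨h0, hw⟩
    exact ⟨m.toNat, hw, by exact_mod_cast (Int.toNat_of_nonneg h0).symm⟩

lemma exists_neg_iff (m : ℤ) : (∃ m' : ℤ, m' < 0 ∧ (m : ℂ) = (m' : ℂ)) ↔ m < 0 := by
  constructor
  · rintro ⟨m', hm', he⟩
    have : m = m' := by exact_mod_cast he
    omega
  · intro h; exact ⟨m, h, rfl⟩

lemma key (z : ℂ) (p q : ℤ) :
    ((if ∃ k : ℕ, k < (-p).toNat ∧ z = (k : ℂ) then 1 else 0 : ℤ)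
      + (if ∃ k : ℕ, k < q.toNat ∧ z + (p : ℂ) = (k : ℂ) then 1 else 0))
      - (if ∃ k : ℕ, k < p.toNat ∧ z + (p : ℂ) = (k : ℂ) then 1 else 0)
    = ((if (∃ m : ℤ, m < 0 ∧ z + ((p : ℤ) : ℂ) = m) ∨
          (∃ m : ℤ, m < 0 ∧ z + ((p - q : ℤ) : ℂ) = m) then 1 else 0 : ℤ)
      - (if ∃ m : ℤ, m < 0 ∧ z = m then 1 else 0)) := by
  by_cases hz : ∃ m : ℤ, z = (m : ℂ)
  · obtain ⟨m, rfl⟩ := hz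
    have hsum : (m : ℂ) + (p : ℂ) = ((m + p : ℤ) : ℂ) := by push_cast; ring
    have hsub : (m : ℂ) + ((p - q : ℤ) : ℂ) = ((m + (p - q) : ℤ) : ℂ) := by push_cast; ring
    rw [hsum, hsub, if_congr (exists_nat_iff m _) rfl rfl,
      if_congr (exists_nat_iff (m + p) _) rfl rfl, if_congr (exists_nat_iff (m + p) _) rfl rfl,
      if_congr (or_congr (exists_neg_iff (m + p)) (exists_neg_iff (m + (p - q)))) rfl rfl,
      if_congr (exists_neg_iff m) rfl rfl]
    split_ifs <;> omega
  · have hni : ∀ c : ℤ, ∀ m : ℤ, z + (c : ℂ) ≠ (m : ℂ) := by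
      intro c m h
      exact hz ⟨m - c, by push_cast; linear_combination h⟩
    have hz' : ∀ m : ℤ, z ≠ (m : ℂ) := fun m h => hz ⟨m, h⟩
    have h1 : ¬∃ k : ℕ, k < (-p).toNat ∧ z = (k : ℂ) := by
      rintro ⟨k, _, he⟩; exact hz' k (by exact_mod_cast he)
    have h2 : ¬∃ k : ℕ, k < q.toNat ∧ z + (p : ℂ) = (k : ℂ) := by
      rintro ⟨k, _, he⟩; exact hni p k (by exact_mod_cast he)
    have h3 : ¬∃ k : ℕ, k < p.toNat ∧ z + (p : ℂ) = (k : ℂ) := by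
      rintro ⟨k, _, he⟩; exact hni p k (by exact_mod_cast he)
    have h4 : ¬((∃ m : ℤ, m < 0 ∧ z + ((p : ℤ) : ℂ) = m) ∨
        (∃ m : ℤ, m < 0 ∧ z + ((p - q : ℤ) : ℂ) = m)) := by
      rintro (⟨m, _, he⟩ | ⟨m, _, he⟩)
      · exact hni p m he
      · exact hni (p - q) m he
    have h5 : ¬∃ m : ℤ, m < 0 ∧ z = (m : ℂ) := by
      rintro ⟨m, _, he⟩; exact hz' m he
    rw [if_neg h1, if_neg h2, if_neg h3, if_neg h4, if_neg h5]
    ring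

/-- order computation of equation (12) in Theorem 5.4: with
`I₀ = nsupp(v)`, `I = nsupp(v+u)`, `J = nsupp(v+u−u')`,
`ord_s([v+sb]_{u₋}·[v+u+sb]_{u'₊}) − ord_s([v+u+sb]_{u₊}) = |I ∪ J| − |I₀|`. -/
theorem ord_critical_term {n : ℕ} (hn : 0 < n) (v b : Fin n → ℂ) (u u' : Fin n → ℤ)
    (hb : ∀ j, b j ≠ 0)
    (I₀ I J : Finset (Fin n)) (hI₀ : I₀ = nsupp v)
    (hI : I = nsupp (fun i => v i + ((u i : ℤ) : ℂ)))
    (hJ : J = nsupp (fun i => v i + ((u i - u' i : ℤ) : ℂ))) :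
    ((pertFF v b (fun i => (-(u i)).toNat) *
        pertFF (fun i => v i + ((u i : ℤ) : ℂ)) b (fun i => (u' i).toNat)).natTrailingDegree : ℤ) -
      ((pertFF (fun i => v i + ((u i : ℤ) : ℂ)) b (fun i => (u i).toNat)).natTrailingDegree : ℤ)
    = ((I ∪ J).card : ℤ) - (I₀.card : ℤ) := by
  rw [natTrailingDegree_mul (pertFF_ne_zero _ _ _ hb) (pertFF_ne_zero _ _ _ hb),
    ntd_pertFF _ _ _ hb, ntd_pertFF _ _ _ hb, ntd_pertFF _ _ _ hb]
  have hcard : ∀ S : Finset (Fin n), (S.card : ℤ) = ∑ i, if i ∈ S then (1 : ℤ) else 0 := by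
    intro S
    rw [Finset.sum_ite_mem, Finset.univ_inter, Finset.sum_const]
    simp
  rw [hcard, hcard]
  push_cast
  rw [← Finset.sum_add_distrib, ← Finset.sum_sub_distrib, ← Finset.sum_sub_distrib]
  refine Finset.sum_congr rfl fun i _ => ?_
  have hmem : ∀ (f : Fin n → ℂ), i ∈ nsupp f ↔ ∃ m : ℤ, m < 0 ∧ f i = (m : ℂ) := by
    intro f; simp [nsupp]
  simp only [hI₀, hI, hJ, Finset.mem_union, hmem]
  exact key (v i) (u i) (u' i)
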